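/- Let G be a connected weighted graph on a finite vertex set V with Laplacian L, let T be a nonempty proper subset of V with complement S = V ∖ T, and assume L_{SS} is positive definite, so that SC(L,T) is defined. Let Z be a Moore–Penrose pseudoinverse of L, let I be the T × T identity matrix, and let J be the T × T all-ones matrix. Then the matrix (I − |T|^{-1} J) · Z_{[T,T]} · (I − |T|^{-1} J) is a Moore–Penrose pseudoinverse of SC(L,T), where Z_{[T,T]} denotes the T × T principal submatrix of Z. -/

import Mathlib

open Matrix

variable {V : Type*}

/-- The Laplacian of a weighted graph. -/
noncomputable def lap [Fintype V] [DecidableEq V] (w : V → V → ℝ) : Matrix V V ℝ :=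
  Matrix.of fun u v => if u = v then ∑ z, w u z else - w u v

/-- The block of a matrix with rows selected by `P` and columns selected by `Q`. -/
def blk (M : Matrix V V ℝ) (P Q : V → Prop) : Matrix {v // P v} {v // Q v} ℝ :=
  Matrix.of fun a b => M a.1 b.1

/-- The Schur complement of `M` onto `T`. -/
noncomputable def SC [Fintype V] [DecidableEq V] (M : Matrix V V ℝ) (T : Set V)
    [DecidablePred (· ∈ T)] : Matrix {v // v ∈ T} {v // v ∈ T} ℝ :=
  blk M (· ∈ T) (· ∈ T) -
    blk M (· ∈ T) (fun v => v ∉ T) * (blk M (fun v => v ∉ T) (fun v => v ∉ T))⁻¹ *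
      blk M (fun v => v ∉ T) (· ∈ T)

set_option linter.unusedSectionVars false
set_option linter.unusedVariables false
set_option linter.unusedTactic false
set_option maxHeartbeats 1000000

section Aux

variable [Fintype V] [DecidableEq V]

lemma mulVec_ext {m n : Type*} [Fintype n] [DecidableEq n] {A B : Matrix m n ℝ}
    (h : ∀ x, A *ᵥ x = B *ᵥ x) : A = B := by
  ext a b
  have := congrFun (h (Pi.single b 1)) a
  simpa [Matrix.mulVec_single] using this

lemma sum_split (T : Set V) [DecidablePred (· ∈ T)] (f : V → ℝ) :
    ∑ v, f v = (∑ a : {v // v ∈ T}, f a.1) + ∑ a : {v // v ∉ T}, f a.1 := by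
  rw [← Finset.sum_filter_add_sum_filter_not Finset.univ (· ∈ T) f]
  congr 1
  · exact Finset.sum_subtype _ (by simp) f
  · exact Finset.sum_subtype _ (by simp) f

/-- Glue a vector on `T` and a vector on `Tᶜ` to a vector on `V`. -/
def glue (T : Set V) [DecidablePred (· ∈ T)] (x : {v // v ∈ T} → ℝ)
    (y : {v // v ∉ T} → ℝ) : V → ℝ :=
  fun v => if h : v ∈ T then x ⟨v, h⟩ else y ⟨v, h⟩

lemma glue_mem (T : Set V) [DecidablePred (· ∈ T)] (x y) {v : V} (h : v ∈ T) :
    glue T x y v = x ⟨v, h⟩ := dif_pos h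

lemma glue_not_mem (T : Set V) [DecidablePred (· ∈ T)] (x y) {v : V} (h : v ∉ T) :
    glue T x y v = y ⟨v, h⟩ := dif_neg h

lemma glue_self (T : Set V) [DecidablePred (· ∈ T)] (g : V → ℝ) :
    glue T (fun a => g a.1) (fun a => g a.1) = g := by
  funext v
  by_cases h : v ∈ T
  · rw [glue_mem T _ _ h]
  · rw [glue_not_mem T _ _ h]

lemma mulVec_glue_mem (T : Set V) [DecidablePred (· ∈ T)] (M : Matrix V V ℝ)
    (x : {v // v ∈ T} → ℝ) (y : {v // v ∉ T} → ℝ) {v : V} (h : v ∈ T) :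
    (M *ᵥ glue T x y) v =
      (blk M (· ∈ T) (· ∈ T) *ᵥ x) ⟨v, h⟩ +
        (blk M (· ∈ T) (fun v => v ∉ T) *ᵥ y) ⟨v, h⟩ := by
  simp only [mulVec, dotProduct, blk, Matrix.of_apply]
  rw [sum_split T]
  congr 1
  · exact Finset.sum_congr rfl fun a _ => by rw [glue_mem T _ _ a.2]
  · exact Finset.sum_congr rfl fun a _ => by rw [glue_not_mem T _ _ a.2]

lemma mulVec_glue_not_mem (T : Set V) [DecidablePred (· ∈ T)] (M : Matrix V V ℝ)
    (x : {v // v ∈ T} → ℝ) (y : {v // v ∉ T} → ℝ) {v : V} (h : v ∉ T) :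
    (M *ᵥ glue T x y) v =
      (blk M (fun v => v ∉ T) (· ∈ T) *ᵥ x) ⟨v, h⟩ +
        (blk M (fun v => v ∉ T) (fun v => v ∉ T) *ᵥ y) ⟨v, h⟩ := by
  simp only [mulVec, dotProduct, blk, Matrix.of_apply]
  rw [sum_split T]
  congr 1
  · exact Finset.sum_congr rfl fun a _ => by rw [glue_mem T _ _ a.2]
  · exact Finset.sum_congr rfl fun a _ => by rw [glue_not_mem T _ _ a.2]

lemma glue_dot (T : Set V) [DecidablePred (· ∈ T)] (x y) (f : V → ℝ) :
    glue T x y ⬝ᵥ f = (x ⬝ᵥ fun a => f a.1) + (y ⬝ᵥ fun a => f a.1) := by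
  simp only [dotProduct]
  rw [sum_split T]
  congr 1
  · exact Finset.sum_congr rfl fun a _ => by rw [glue_mem T _ _ a.2]
  · exact Finset.sum_congr rfl fun a _ => by rw [glue_not_mem T _ _ a.2]

end Aux


section Lap
variable [Fintype V] [DecidableEq V]

lemma lap_transpose (w : V → V → ℝ) (hw_symm : ∀ u v, w u v = w v u) :
    (lap w)ᵀ = lap w := by
  ext u v
  simp only [transpose_apply, lap, Matrix.of_apply]
  rcases eq_or_ne u v with rfl | h
  · simp
  · simp [h, Ne.symm h, hw_symm u v]

lemma lap_row_sum (w : V → V → ℝ) (hw_diag : ∀ u, w u u = 0) (u : V) :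
    ∑ v, lap w u v = 0 := by
  have key : ∀ v : V, lap w u v = -w u v + if u = v then (∑ z, w u z) + w u v else 0 := by
    intro v
    simp only [lap, Matrix.of_apply]
    split
    · next h => subst h; rw [hw_diag]; ring
    · ring
  rw [Finset.sum_congr rfl fun v _ => key v, Finset.sum_add_distrib, Finset.sum_ite_eq]
  simp [hw_diag u]

lemma lap_mulVec_one (w : V → V → ℝ) (hw_diag : ∀ u, w u u = 0) :
    lap w *ᵥ (fun _ => (1:ℝ)) = 0 := by
  funext u
  simp only [mulVec, dotProduct, mul_one, Pi.zero_apply]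
  exact lap_row_sum w hw_diag u

lemma sum_mulVec_eq_zero {n : Type*} [Fintype n] {A : Matrix n n ℝ} (hsym : Aᵀ = A)
    (h1 : A *ᵥ (fun _ => (1:ℝ)) = 0) (x : n → ℝ) : ∑ a, (A *ᵥ x) a = 0 := by
  simp only [mulVec, dotProduct]
  rw [Finset.sum_comm]
  refine Finset.sum_eq_zero fun b _ => ?_
  rw [← Finset.sum_mul]
  have h2 : ∑ a, A b a = 0 := by
    have := congrFun h1 b
    simpa [mulVec, dotProduct] using this
  have h3 : ∀ a, A a b = A b a := fun a => congrFun (congrFun hsym b) a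
  rw [Finset.sum_congr rfl fun a _ => h3 a, h2, zero_mul]

lemma lap_mulVec_apply (w : V → V → ℝ) (hw_diag : ∀ u, w u u = 0) (g : V → ℝ) (u : V) :
    (lap w *ᵥ g) u = ∑ v, w u v * (g u - g v) := by
  simp only [mulVec, dotProduct, lap, Matrix.of_apply]
  have key : ∀ v : V, (if u = v then ∑ z, w u z else -w u v) * g v
      = (w u v * (g u - g v) - w u v * g u) + if u = v then (∑ z, w u z) * g u else 0 := by
    intro v
    split
    · next h => subst h; rw [hw_diag]; ring
    · ring
  rw [Finset.sum_congr rfl fun v _ => key v, Finset.sum_add_distrib, Finset.sum_ite_eq,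
    Finset.sum_sub_distrib, ← Finset.sum_mul]
  simp

lemma lap_quad (w : V → V → ℝ) (hw_symm : ∀ u v, w u v = w v u)
    (hw_diag : ∀ u, w u u = 0) (g : V → ℝ) :
    g ⬝ᵥ (lap w *ᵥ g) = (∑ u, ∑ v, w u v * (g u - g v)^2) / 2 := by
  have h1 : g ⬝ᵥ (lap w *ᵥ g) = ∑ u, ∑ v, w u v * (g u * (g u - g v)) := by
    simp only [dotProduct, lap_mulVec_apply w hw_diag, Finset.mul_sum]
    exact Finset.sum_congr rfl fun u _ => Finset.sum_congr rfl fun v _ => by ring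
  have h2 : ∑ u, ∑ v, w u v * (g v * (g u - g v))
      = ∑ u, ∑ v, -(w u v * (g u * (g u - g v))) := by
    rw [Finset.sum_comm]
    exact Finset.sum_congr rfl fun u _ => Finset.sum_congr rfl fun v _ => by
      rw [hw_symm]; ring
  have h3 : ∑ u, ∑ v, w u v * (g u - g v)^2
      = ∑ u, ∑ v, (w u v * (g u * (g u - g v)) - w u v * (g v * (g u - g v))) :=
    Finset.sum_congr rfl fun u _ => Finset.sum_congr rfl fun v _ => by ring
  rw [h1, h3]
  simp only [Finset.sum_sub_distrib, h2, Finset.sum_neg_distrib]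
  ring

lemma lap_quad_nonneg (w : V → V → ℝ) (hw_symm : ∀ u v, w u v = w v u)
    (hw_nonneg : ∀ u v, 0 ≤ w u v) (hw_diag : ∀ u, w u u = 0) (g : V → ℝ) :
    0 ≤ g ⬝ᵥ (lap w *ᵥ g) := by
  rw [lap_quad w hw_symm hw_diag]
  apply div_nonneg _ (by norm_num)
  exact Finset.sum_nonneg fun u _ => Finset.sum_nonneg fun v _ =>
    mul_nonneg (hw_nonneg u v) (sq_nonneg _)

lemma lap_quad_eq_zero (w : V → V → ℝ) (hw_symm : ∀ u v, w u v = w v u)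
    (hw_nonneg : ∀ u v, 0 ≤ w u v) (hw_diag : ∀ u, w u u = 0)
    (hconn : (SimpleGraph.fromRel fun u v => 0 < w u v).Connected) (g : V → ℝ)
    (h : g ⬝ᵥ (lap w *ᵥ g) = 0) : ∀ u v, g u = g v := by
  rw [lap_quad w hw_symm hw_diag, div_eq_zero_iff] at h
  have h' : ∑ u, ∑ v, w u v * (g u - g v)^2 = 0 := by
    rcases h with h | h
    · exact h
    · norm_num at h
  have key : ∀ u v, 0 < w u v → g u = g v := by
    intro u v hw
    have h1 := (Finset.sum_eq_zero_iff_of_nonneg (fun u _ => Finset.sum_nonneg fun v _ =>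
      mul_nonneg (hw_nonneg u v) (sq_nonneg _))).mp h' u (Finset.mem_univ u)
    have h2 := (Finset.sum_eq_zero_iff_of_nonneg (fun v _ =>
      mul_nonneg (hw_nonneg u v) (sq_nonneg _))).mp h1 v (Finset.mem_univ v)
    rcases mul_eq_zero.mp h2 with h | h
    · exact absurd h hw.ne'
    · have := sq_eq_zero_iff.mp h; linarith
  intro u v
  obtain ⟨p⟩ := hconn.preconnected u v
  induction p with
  | nil => rfl
  | cons hadj p ih =>
    obtain ⟨_, h1 | h1⟩ := (SimpleGraph.fromRel_adj _ _ _).mp hadj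
    · exact (key _ _ h1).trans ih
    · exact ((key _ _ h1).symm).trans ih


/-- General surjectivity-onto-sum-zero lemma, for any symmetric PSD matrix whose quadratic
form vanishes only on constants and which kills constants. -/
lemma psd_surj {n : Type*} [Fintype n] [DecidableEq n] [Nonempty n] {A : Matrix n n ℝ}
    (hsym : Aᵀ = A) (h1 : A *ᵥ (fun _ => (1:ℝ)) = 0)
    (hnn : ∀ x, 0 ≤ x ⬝ᵥ (A *ᵥ x))
    (hz : ∀ x, x ⬝ᵥ (A *ᵥ x) = 0 → ∀ a b, x a = x b)
    (e : n → ℝ) (he : ∑ a, e a = 0) : ∃ y, A *ᵥ y = e := by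
  set J : Matrix n n ℝ := Matrix.of fun _ _ => 1 with hJ
  have hJmul : ∀ x : n → ℝ, J *ᵥ x = fun _ => ∑ a, x a := by
    intro x; funext u; simp [hJ, mulVec, dotProduct]
  have hcard : (Fintype.card n : ℝ) ≠ 0 := Nat.cast_ne_zero.mpr Fintype.card_ne_zero
  have hinj : Function.Injective (Matrix.mulVecLin (A + J)) := by
    rw [injective_iff_map_eq_zero]
    intro x hx
    rw [mulVecLin_apply, Matrix.add_mulVec, hJmul] at hx
    have h0 : x ⬝ᵥ (A *ᵥ x) + (∑ a, x a) * (∑ a, x a) = 0 := by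
      have hdot : x ⬝ᵥ ((A *ᵥ x) + fun _ => ∑ a, x a) = 0 := by rw [hx, dotProduct_zero]
      rw [dotProduct_add] at hdot
      have h2 : (x ⬝ᵥ fun _ => ∑ a, x a) = (∑ a, x a) * (∑ a, x a) := by
        simp [dotProduct, ← Finset.sum_mul]
      linarith
    have hq0 : x ⬝ᵥ (A *ᵥ x) = 0 := by nlinarith [hnn x, mul_self_nonneg (∑ a, x a)]
    have hs0 : ∑ a, x a = 0 := by
      have : (∑ a, x a) * (∑ a, x a) = 0 := by linarith
      exact mul_self_eq_zero.mp this
    have hc := hz x hq0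
    funext u
    have hsum : ∑ a, x a = (Fintype.card n : ℝ) * x u := by
      rw [Finset.sum_congr rfl fun a _ => hc a u]
      simp [Finset.card_univ, mul_comm]
    rw [hs0] at hsum
    have := (mul_eq_zero.mp hsum.symm).resolve_left hcard
    simpa using this
  obtain ⟨y, hy⟩ := (LinearMap.injective_iff_surjective).mp hinj e
  rw [mulVecLin_apply, Matrix.add_mulVec, hJmul] at hy
  have hsy : ∑ a, y a = 0 := by
    have h3 := congrArg (fun f => ∑ a, f a) hy
    simp only [Pi.add_apply, Finset.sum_add_distrib] at h3
    rw [sum_mulVec_eq_zero hsym h1 y, he, Finset.sum_const, Finset.card_univ,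
      nsmul_eq_mul] at h3
    have : (Fintype.card n : ℝ) * ∑ a, y a = 0 := by linarith
    exact (mul_eq_zero.mp this).resolve_left hcard
  refine ⟨y, ?_⟩
  rw [← hy]
  funext u
  simp [hsy]

lemma lap_surj (w : V → V → ℝ) (hw_symm : ∀ u v, w u v = w v u)
    (hw_nonneg : ∀ u v, 0 ≤ w u v) (hw_diag : ∀ u, w u u = 0)
    (hconn : (SimpleGraph.fromRel fun u v => 0 < w u v).Connected) [Nonempty V]
    (e : V → ℝ) (he : ∑ v, e v = 0) : ∃ y, lap w *ᵥ y = e :=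
  psd_surj (lap_transpose w hw_symm) (lap_mulVec_one w hw_diag)
    (lap_quad_nonneg w hw_symm hw_nonneg hw_diag)
    (fun x hx => lap_quad_eq_zero w hw_symm hw_nonneg hw_diag hconn x hx) e he

lemma lapZ_fix (w : V → V → ℝ) (hw_symm : ∀ u v, w u v = w v u)
    (hw_nonneg : ∀ u v, 0 ≤ w u v) (hw_diag : ∀ u, w u u = 0)
    (hconn : (SimpleGraph.fromRel fun u v => 0 < w u v).Connected) [Nonempty V]
    (Z : Matrix V V ℝ) (hZ1 : lap w * Z * lap w = lap w)
    (e : V → ℝ) (he : ∑ v, e v = 0) : lap w *ᵥ (Z *ᵥ e) = e := by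
  obtain ⟨y, hy⟩ := lap_surj w hw_symm hw_nonneg hw_diag hconn e he
  rw [← hy, mulVec_mulVec, mulVec_mulVec, hZ1]


lemma blk_transpose (M : Matrix V V ℝ) (P Q : V → Prop) :
    (blk M P Q)ᵀ = blk Mᵀ Q P := rfl

/-- Extend a vector on `T` harmonically to `V`. -/
noncomputable def extT (w : V → V → ℝ) (T : Set V) [DecidablePred (· ∈ T)]
    (x : {v // v ∈ T} → ℝ) : V → ℝ :=
  glue T x (-((blk (lap w) (fun v => v ∉ T) (fun v => v ∉ T))⁻¹ *ᵥ
    (blk (lap w) (fun v => v ∉ T) (· ∈ T) *ᵥ x)))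

lemma extT_apply_mem (w : V → V → ℝ) (T : Set V) [DecidablePred (· ∈ T)]
    (x : {v // v ∈ T} → ℝ) (a : {v // v ∈ T}) : extT w T x a.1 = x a := by
  rw [extT, glue_mem T _ _ a.2]

lemma extT_spec (w : V → V → ℝ) (T : Set V) [DecidablePred (· ∈ T)]
    (hdet : IsUnit (blk (lap w) (fun v => v ∉ T) (fun v => v ∉ T)).det)
    (x : {v // v ∈ T} → ℝ) :
    lap w *ᵥ extT w T x = glue T (SC (lap w) T *ᵥ x) 0 := by
  funext v
  by_cases h : v ∈ T
  · rw [extT, mulVec_glue_mem T _ _ _ h, glue_mem T _ _ h]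
    rw [mulVec_neg, mulVec_mulVec, mulVec_mulVec, SC, sub_mulVec]
    simp [Matrix.mul_assoc, sub_eq_add_neg]
  · rw [extT, mulVec_glue_not_mem T _ _ _ h, glue_not_mem T _ _ h]
    rw [mulVec_neg, mulVec_mulVec, mulVec_mulVec, Matrix.mul_nonsing_inv _ hdet]
    simp

lemma SC_transpose (w : V → V → ℝ) (hw_symm : ∀ u v, w u v = w v u) (T : Set V)
    [DecidablePred (· ∈ T)] (hL : (lap w)ᵀ = lap w) : (SC (lap w) T)ᵀ = SC (lap w) T := by
  have hsym : ∀ a b : V, lap w a b = lap w b a := by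
    intro a b
    conv_lhs => rw [← hL]
    simp [Matrix.transpose_apply]
  have e1 : (blk (lap w) (· ∈ T) (· ∈ T))ᵀ = blk (lap w) (· ∈ T) (· ∈ T) := by
    ext a b; exact hsym b.1 a.1
  have e2 : (blk (lap w) (· ∈ T) (fun v => v ∉ T))ᵀ =
      blk (lap w) (fun v => v ∉ T) (· ∈ T) := by
    ext a b; exact hsym b.1 a.1
  have e3 : (blk (lap w) (fun v => v ∉ T) (fun v => v ∉ T))ᵀ =
      blk (lap w) (fun v => v ∉ T) (fun v => v ∉ T) := by
    ext a b; exact hsym b.1 a.1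
  have e4 : (blk (lap w) (fun v => v ∉ T) (· ∈ T))ᵀ =
      blk (lap w) (· ∈ T) (fun v => v ∉ T) := by
    ext a b; exact hsym b.1 a.1
  unfold SC
  rw [transpose_sub, transpose_mul, transpose_mul, transpose_nonsing_inv]
  rw [e1, e2, e3, e4, Matrix.mul_assoc]

lemma SC_mulVec_one (w : V → V → ℝ) (hw_diag : ∀ u, w u u = 0) (T : Set V)
    [DecidablePred (· ∈ T)]
    (hdet : IsUnit (blk (lap w) (fun v => v ∉ T) (fun v => v ∉ T)).det) :
    SC (lap w) T *ᵥ (fun _ => (1:ℝ)) = 0 := by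
  have hone : (fun _ => (1:ℝ)) = glue T (fun _ => 1) (fun _ => 1) := by
    funext v
    by_cases h : v ∈ T
    · rw [glue_mem T _ _ h]
    · rw [glue_not_mem T _ _ h]
  have h0 : lap w *ᵥ (fun _ => (1:ℝ)) = 0 := lap_mulVec_one w hw_diag
  -- S-block equation
  have hS : blk (lap w) (fun v => v ∉ T) (· ∈ T) *ᵥ (fun _ => 1) +
      blk (lap w) (fun v => v ∉ T) (fun v => v ∉ T) *ᵥ (fun _ => 1) = 0 := by
    funext a
    have := congrFun h0 a.1
    rw [hone, mulVec_glue_not_mem T _ _ _ a.2] at this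
    simpa using this
  have hST : blk (lap w) (fun v => v ∉ T) (· ∈ T) *ᵥ (fun _ => 1) =
      -(blk (lap w) (fun v => v ∉ T) (fun v => v ∉ T) *ᵥ (fun _ => 1)) := by
    exact eq_neg_of_add_eq_zero_left hS
  have hext : extT w T (fun _ => 1) = glue T (fun _ => 1) (fun _ => 1) := by
    rw [extT]
    congr 1
    rw [hST, mulVec_neg, neg_neg, mulVec_mulVec, Matrix.nonsing_inv_mul _ hdet, one_mulVec]
  have := extT_spec w T hdet (fun _ => 1)
  rw [hext, ← hone, h0] at this
  funext a
  have h2 := congrFun this.symm a.1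
  rw [glue_mem T _ _ a.2] at h2
  simpa using h2

lemma SC_quad (w : V → V → ℝ) (T : Set V) [DecidablePred (· ∈ T)]
    (hdet : IsUnit (blk (lap w) (fun v => v ∉ T) (fun v => v ∉ T)).det)
    (x : {v // v ∈ T} → ℝ) :
    x ⬝ᵥ (SC (lap w) T *ᵥ x) = extT w T x ⬝ᵥ (lap w *ᵥ extT w T x) := by
  rw [extT_spec w T hdet x, extT, glue_dot]
  have h1 : (fun a : {v // v ∈ T} => glue T (SC (lap w) T *ᵥ x) 0 a.1) =
      SC (lap w) T *ᵥ x := by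
    funext a; rw [glue_mem T _ _ a.2]
  have h2 : (fun a : {v // v ∉ T} => glue T (SC (lap w) T *ᵥ x)
      (0 : {v // v ∉ T} → ℝ) a.1) = (0 : {v // v ∉ T} → ℝ) := by
    funext a; rw [glue_not_mem T _ _ a.2]
  rw [h1, h2, dotProduct_zero, add_zero]


section main
variable (w : V → V → ℝ) (hw_symm : ∀ u v, w u v = w v u)
  (hw_nonneg : ∀ u v, 0 ≤ w u v) (hw_diag : ∀ u, w u u = 0)
  (hconn : (SimpleGraph.fromRel fun u v => 0 < w u v).Connected)
  (T : Set V) [DecidablePred (· ∈ T)]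
  (hdet : IsUnit (blk (lap w) (fun v => v ∉ T) (fun v => v ∉ T)).det)

include hw_symm hw_nonneg hw_diag hconn hdet in
lemma SC_quad_zero_const (x : {v // v ∈ T} → ℝ)
    (h : x ⬝ᵥ (SC (lap w) T *ᵥ x) = 0) : ∀ a b, x a = x b := by
  rw [SC_quad w T hdet x] at h
  have hc := lap_quad_eq_zero w hw_symm hw_nonneg hw_diag hconn _ h
  intro a b
  rw [← extT_apply_mem w T x a, ← extT_apply_mem w T x b]
  exact hc a.1 b.1

include hw_symm hw_nonneg hw_diag hconn hdet in
lemma SC_quad_nonneg' (x : {v // v ∈ T} → ℝ) : 0 ≤ x ⬝ᵥ (SC (lap w) T *ᵥ x) := by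
  rw [SC_quad w T hdet x]
  exact lap_quad_nonneg w hw_symm hw_nonneg hw_diag _

include hw_symm hw_nonneg hw_diag hconn hdet in
lemma SC_ker (x : {v // v ∈ T} → ℝ) (h : SC (lap w) T *ᵥ x = 0) : ∀ a b, x a = x b := by
  apply SC_quad_zero_const w hw_symm hw_nonneg hw_diag hconn T hdet
  rw [h, dotProduct_zero]

include hw_symm hw_nonneg hw_diag hconn hdet in
lemma SC_surj [Nonempty {v // v ∈ T}] (e : {v // v ∈ T} → ℝ) (he : ∑ a, e a = 0) :
    ∃ y, SC (lap w) T *ᵥ y = e :=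
  psd_surj (SC_transpose w hw_symm T (lap_transpose w hw_symm))
    (SC_mulVec_one w hw_diag T hdet)
    (SC_quad_nonneg' w hw_symm hw_nonneg hw_diag hconn T hdet)
    (SC_quad_zero_const w hw_symm hw_nonneg hw_diag hconn T hdet) e he

include hw_symm hw_nonneg hw_diag hconn hdet in
lemma SC_sum (x : {v // v ∈ T} → ℝ) : ∑ a, (SC (lap w) T *ᵥ x) a = 0 :=
  sum_mulVec_eq_zero (SC_transpose w hw_symm T (lap_transpose w hw_symm)) (SC_mulVec_one w hw_diag T hdet) x

include hw_symm hw_nonneg hw_diag hconn hdet in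
lemma SC_pinv [Nonempty V] (Z : Matrix V V ℝ) (hZ1 : lap w * Z * lap w = lap w) :
    SC (lap w) T * blk Z (· ∈ T) (· ∈ T) * SC (lap w) T = SC (lap w) T := by
  have hext : ∀ x, (SC (lap w) T * blk Z (· ∈ T) (· ∈ T) * SC (lap w) T) *ᵥ x
      = SC (lap w) T *ᵥ x := by
    intro x
    rw [← mulVec_mulVec, ← mulVec_mulVec]
    set e : {v // v ∈ T} → ℝ := SC (lap w) T *ᵥ x with he
    have hsum : ∑ v, glue T e 0 v = 0 := by
      rw [sum_split T]
      have hT : ∀ a : {v // v ∈ T}, glue T e (0 : {v // v ∉ T} → ℝ) a.1 = e a := by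
        intro a; rw [glue_mem T _ _ a.2]
      have hS : ∀ a : {v // v ∉ T}, glue T e (0 : {v // v ∉ T} → ℝ) a.1 = 0 := by
        intro a; rw [glue_not_mem T _ _ a.2]; rfl
      rw [Finset.sum_congr rfl fun a _ => hT a, Finset.sum_congr rfl fun a _ => hS a]
      simpa using SC_sum w hw_symm hw_nonneg hw_diag hconn T hdet x
    have hfix : lap w *ᵥ (Z *ᵥ glue T e 0) = glue T e 0 :=
      lapZ_fix w hw_symm hw_nonneg hw_diag hconn Z hZ1 _ hsum
    set u : V → ℝ := Z *ᵥ glue T e 0 with hu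
    set uT : {v // v ∈ T} → ℝ := fun a => u a.1 with huT
    set uS : {v // v ∉ T} → ℝ := fun a => u a.1 with huS
    have hglue : glue T uT uS = u := glue_self T u
    -- the S-block of the equation  lap w *ᵥ u = glue T e 0
    have hSblock : blk (lap w) (fun v => v ∉ T) (· ∈ T) *ᵥ uT +
        blk (lap w) (fun v => v ∉ T) (fun v => v ∉ T) *ᵥ uS = 0 := by
      funext a
      have h1 := congrFun hfix a.1
      rw [← hglue, mulVec_glue_not_mem T _ _ _ a.2, glue_not_mem T _ _ a.2] at h1
      simpa using h1
    have huS2 : uS = -((blk (lap w) (fun v => v ∉ T) (fun v => v ∉ T))⁻¹ *ᵥ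
        (blk (lap w) (fun v => v ∉ T) (· ∈ T) *ᵥ uT)) := by
      have h2 : blk (lap w) (fun v => v ∉ T) (· ∈ T) *ᵥ uT =
          -(blk (lap w) (fun v => v ∉ T) (fun v => v ∉ T) *ᵥ uS) :=
        eq_neg_of_add_eq_zero_left hSblock
      rw [h2, mulVec_neg, mulVec_mulVec, Matrix.nonsing_inv_mul _ hdet, one_mulVec, neg_neg]
    have hextu : extT w T uT = u := by
      rw [extT, ← huS2, hglue]
    have hspec := extT_spec w T hdet uT
    rw [hextu, hfix] at hspec
    -- hspec : glue T e 0 = glue T (SC *ᵥ uT) 0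
    have hAuT : SC (lap w) T *ᵥ uT = e := by
      funext a
      have h3 := congrFun hspec a.1
      rw [glue_mem T _ _ a.2, glue_mem T _ _ a.2] at h3
      simpa using h3.symm
    have huT2 : uT = blk Z (· ∈ T) (· ∈ T) *ᵥ e := by
      funext a
      have h4 := mulVec_glue_mem T Z e (0 : {v // v ∉ T} → ℝ) a.2
      rw [mulVec_zero] at h4
      have : uT a = (Z *ᵥ glue T e 0) a.1 := rfl
      rw [this, h4]
      simp
    rw [← huT2, hAuT]
  exact mulVec_ext hext
end main


end Lap

theorem schur_complement_pseudoinverse_formula [Fintype V] [DecidableEq V]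
    (w : V → V → ℝ) (hw_symm : ∀ u v, w u v = w v u) (hw_nonneg : ∀ u v, 0 ≤ w u v)
    (hw_diag : ∀ u, w u u = 0)
    (hconn : (SimpleGraph.fromRel fun u v => 0 < w u v).Connected)
    (T : Set V) [DecidablePred (· ∈ T)] (hT_ne : T.Nonempty) (hT_proper : T ≠ Set.univ)
    (hSS : (blk (lap w) (fun v => v ∉ T) (fun v => v ∉ T)).PosDef)
    (Z : Matrix V V ℝ)
    (hZ1 : lap w * Z * lap w = lap w) (hZ2 : Z * lap w * Z = Z)
    (hZ3 : (lap w * Z)ᵀ = lap w * Z) (hZ4 : (Z * lap w)ᵀ = Z * lap w)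
    (P N : Matrix {v // v ∈ T} {v // v ∈ T} ℝ)
    (hP : P = 1 - ((Fintype.card {v // v ∈ T} : ℝ))⁻¹ • Matrix.of fun _ _ => (1 : ℝ))
    (hN : N = P * blk Z (· ∈ T) (· ∈ T) * P) :
    SC (lap w) T * N * SC (lap w) T = SC (lap w) T ∧
    N * SC (lap w) T * N = N ∧
    (SC (lap w) T * N)ᵀ = SC (lap w) T * N ∧
    (N * SC (lap w) T)ᵀ = N * SC (lap w) T := by
  -- basic instances
  obtain ⟨v0, hv0⟩ := hT_ne
  haveI : Nonempty V := ⟨v0⟩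
  haveI : Nonempty {v // v ∈ T} := ⟨⟨v0, hv0⟩⟩
  have hdet : IsUnit (blk (lap w) (fun v => v ∉ T) (fun v => v ∉ T)).det :=
    hSS.det_pos.ne'.isUnit
  have hL : (lap w)ᵀ = lap w := lap_transpose w hw_symm
  set A := SC (lap w) T with hA
  set ZT := blk Z (· ∈ T) (· ∈ T) with hZT
  set t : ℝ := (Fintype.card {v // v ∈ T} : ℝ) with htdef
  have ht : t ≠ 0 := Nat.cast_ne_zero.mpr Fintype.card_ne_zero
  set J : Matrix {v // v ∈ T} {v // v ∈ T} ℝ := Matrix.of fun _ _ => 1 with hJdef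
  have hA_symm : Aᵀ = A := SC_transpose w hw_symm T hL
  have hA1 : A *ᵥ (fun _ => (1:ℝ)) = 0 := SC_mulVec_one w hw_diag T hdet
  have f1 : A * ZT * A = A := SC_pinv w hw_symm hw_nonneg hw_diag hconn T hdet Z hZ1
  -- J algebra
  have hAJ : A * J = 0 := by
    ext a b
    have h1 := congrFun hA1 a
    simpa [Matrix.mul_apply, mulVec, dotProduct, hJdef] using h1
  have hJA : J * A = 0 := by
    ext a b
    have h5 : ∀ k, A k b = A b k := fun k => congrFun (congrFun hA_symm b) k
    have h6 := congrFun hA1 b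
    simp only [mulVec, dotProduct, mul_one] at h6
    simp only [Matrix.mul_apply, Matrix.of_apply, one_mul, Matrix.zero_apply, hJdef]
    rw [Finset.sum_congr rfl fun k _ => h5 k, h6]
    rfl
  have hJJ : J * J = t • J := by
    ext a b
    simp [hJdef, Matrix.mul_apply, Finset.card_univ, htdef]
  have hAP : A * P = A := by
    rw [hP, mul_sub, mul_one, Matrix.mul_smul, hAJ, smul_zero, sub_zero]
  have hPA : P * A = A := by
    rw [hP, sub_mul, one_mul, Matrix.smul_mul, hJA, smul_zero, sub_zero]
  have hPP : P * P = P := by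
    have hc : t⁻¹ * t⁻¹ * t = t⁻¹ := by field_simp
    rw [hP, sub_mul, one_mul, mul_sub, mul_one, Matrix.smul_mul, Matrix.mul_smul, hJJ,
      smul_smul, smul_smul, hc]
    abel
  have hJt : Jᵀ = J := by ext a b; rfl
  have hPt : Pᵀ = P := by rw [hP, transpose_sub, transpose_one, transpose_smul, hJt]
  have hP1 : P *ᵥ (fun _ => (1:ℝ)) = 0 := by
    rw [hP]
    funext a
    rw [sub_mulVec, Matrix.smul_mulVec, one_mulVec]
    have hJ1 : (J *ᵥ (fun _ => (1:ℝ))) a = t := by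
      simp [hJdef, mulVec, dotProduct, Finset.card_univ, htdef]
    simp only [Pi.sub_apply, Pi.smul_apply, smul_eq_mul, Pi.zero_apply, hJ1]
    field_simp
    simp
  have hsumP : ∀ x, ∑ a, (P *ᵥ x) a = 0 := sum_mulVec_eq_zero hPt hP1
  -- N * A = P
  have hNA : N * A = P := by
    have h8 : N * A = P * (ZT * A) := by
      rw [hN, Matrix.mul_assoc, hPA, Matrix.mul_assoc]
    apply mulVec_ext
    intro x
    rw [h8, ← mulVec_mulVec, ← mulVec_mulVec]
    set d := ZT *ᵥ (A *ᵥ x) - x with hd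
    have hf : A *ᵥ (ZT *ᵥ (A *ᵥ x)) = A *ᵥ x := by
      have := congrArg (fun M => M *ᵥ x) f1
      simpa only [← mulVec_mulVec] using this
    have hAd : A *ᵥ d = 0 := by
      rw [hd, mulVec_sub, hf, sub_self]
    have hconst : ∀ a b, d a = d b :=
      SC_ker w hw_symm hw_nonneg hw_diag hconn T hdet d hAd
    have hPd : P *ᵥ d = 0 := by
      funext a
      rw [hP, sub_mulVec, Matrix.smul_mulVec, one_mulVec]
      have hsum : ∑ k, d k = t * d a := by
        rw [Finset.sum_congr rfl fun k _ => hconst k a, Finset.sum_const,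
          Finset.card_univ, nsmul_eq_mul]
      have hJd : (J *ᵥ d) a = ∑ k, d k := by simp [hJdef, mulVec, dotProduct]
      simp only [Pi.sub_apply, Pi.smul_apply, smul_eq_mul, Pi.zero_apply, hJd, hsum]
      field_simp
      simp
    have h9 : ZT *ᵥ (A *ᵥ x) = x + d := by rw [hd]; abel
    rw [h9, mulVec_add, hPd, add_zero]
  -- A * N = P
  have hAN : A * N = P := by
    have h10 : A * N = A * ZT * P := by
      rw [hN, ← Matrix.mul_assoc, ← Matrix.mul_assoc, hAP]
    apply mulVec_ext
    intro x
    rw [h10, ← mulVec_mulVec, ← mulVec_mulVec]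
    obtain ⟨y, hy⟩ := SC_surj w hw_symm hw_nonneg hw_diag hconn T hdet (P *ᵥ x) (hsumP x)
    rw [← hy]
    have := congrArg (fun M => M *ᵥ y) f1
    simpa only [← mulVec_mulVec] using this
  refine ⟨?_, ?_, ?_, ?_⟩
  · rw [hAN, hPA]
  · rw [hNA, hN, ← Matrix.mul_assoc, ← Matrix.mul_assoc, hPP, ← hN]
  · rw [hAN, hPt]
  · rw [hNA, hPt]
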